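/- arXiv:2211.14704 — 3 statements merged into one kernel-verified Lean document; each statement's English description precedes it below -/
import Mathlib

section
/- For every integer n ≥ 2 and every real t, the matrix exponential satisfies e^{−itA(K_n)} = e^{−it(n−1)}·(J_n/n) + e^{it}·(I_n − J_n/n), where A(K_n) = J_n − I_n is the adjacency matrix of the complete graph K_n and J_n is the all-ones n×n matrix; consequently, for every vertex u of K_n and every real t, |⟨e_u, e^{−itA(K_n)} e_u⟩| = |e^{−it(n−1)}/n + e^{it}(1 − 1/n)| ≥ 1 − 2/n. -/
noncomputable section

open Matrix

/-- The adjacency matrix of the complete graph `K_n`: `J_n - I_n`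
(all entries `1` except `0` on the diagonal). -/
def adjKn (n : ℕ) : Matrix (Fin n) (Fin n) ℂ :=
  Matrix.of fun j k => if j = k then 0 else 1

/-- The all-ones `n × n` matrix `J_n`. -/
def allOnes (n : ℕ) : Matrix (Fin n) (Fin n) ℂ :=
  Matrix.of fun _ _ => 1

lemma exp_smul_idem {A : Type*} [NormedRing A] [NormedAlgebra ℂ A] [CompleteSpace A]
    (a : ℂ) (p : A) (hp : p * p = p) :
    NormedSpace.exp (a • p) = Complex.exp a • p + (1 - p) := by
  have hpow : ∀ k : ℕ, p ^ (k + 1) = p := by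
    intro k
    induction k with
    | zero => simp
    | succ k ih => rw [pow_succ, ih, hp]
  have hsumc : Summable (fun k : ℕ => ((Nat.factorial k : ℂ))⁻¹ * a ^ k) := by
    simpa [div_eq_inv_mul] using NormedSpace.expSeries_div_summable a
  have hsum : Summable fun k : ℕ => (((Nat.factorial k) : ℂ)⁻¹ * a ^ k) • p := by
    exact hsumc.smul_const p
  have hsum2 : Summable fun k : ℕ => (if k = 0 then (1 - p) else 0) :=
    (hasSum_ite_eq 0 (1 - p)).summable
  have key : (fun k : ℕ => (((Nat.factorial k) : ℂ)⁻¹) • (a • p) ^ k)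
      = fun k => (((Nat.factorial k) : ℂ)⁻¹ * a ^ k) • p + (if k = 0 then (1 - p) else 0) := by
    funext k
    cases k with
    | zero => simp
    | succ k => simp [smul_pow, hpow, smul_smul]
  have e1 : NormedSpace.exp (a • p) = ∑' (k : ℕ), ((Nat.factorial k : ℂ))⁻¹ • (a • p) ^ k :=
    by rw [NormedSpace.exp_eq_tsum ℂ]
  rw [e1, tsum_congr fun k => congrFun key k, hsum.tsum_add hsum2, hsumc.tsum_smul_const,
    tsum_ite_eq]
  congr 2
  rw [Complex.exp_eq_exp_ℂ, NormedSpace.exp_eq_tsum ℂ]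
  simp [smul_eq_mul]

lemma matrix_exp_smul_idem {n : ℕ} (a : ℂ) (p : Matrix (Fin n) (Fin n) ℂ) (hp : p * p = p) :
    NormedSpace.exp (a • p) = Complex.exp a • p + (1 - p) := by
  letI : SeminormedRing (Matrix (Fin n) (Fin n) ℂ) := Matrix.linftyOpSemiNormedRing
  letI : NormedRing (Matrix (Fin n) (Fin n) ℂ) := Matrix.linftyOpNormedRing
  letI : NormedAlgebra ℂ (Matrix (Fin n) (Fin n) ℂ) := Matrix.linftyOpNormedAlgebra
  exact exp_smul_idem a p hp

/-- For every integer `n ≥ 2` and every real `t`,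
`e^{-itA(K_n)} = e^{-it(n-1)} (J_n/n) + e^{it} (I_n - J_n/n)`; consequently, for every vertex `u`,
`|⟨e_u, e^{-itA(K_n)} e_u⟩| = |e^{-it(n-1)}/n + e^{it}(1 - 1/n)| ≥ 1 - 2/n`. -/
theorem clique_exponential_and_sedentary (n : ℕ) (hn : 2 ≤ n) (t : ℝ) :
    NormedSpace.exp ((-(t : ℂ) * Complex.I) • adjKn n)
      = Complex.exp (-(t : ℂ) * Complex.I * ((n : ℂ) - 1)) • ((n : ℂ)⁻¹ • allOnes n)
        + Complex.exp ((t : ℂ) * Complex.I) • ((1 : Matrix (Fin n) (Fin n) ℂ)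
            - (n : ℂ)⁻¹ • allOnes n) ∧
    ∀ u : Fin n,
      ‖NormedSpace.exp ((-(t : ℂ) * Complex.I) • adjKn n) u u‖
          = ‖Complex.exp (-(t : ℂ) * Complex.I * ((n : ℂ) - 1)) / (n : ℂ)
              + Complex.exp ((t : ℂ) * Complex.I) * (1 - 1 / (n : ℂ))‖ ∧
        1 - 2 / (n : ℝ)
          ≤ ‖NormedSpace.exp ((-(t : ℂ) * Complex.I) • adjKn n) u u‖ := by
  have hn0 : (n : ℂ) ≠ 0 := Nat.cast_ne_zero.mpr (by omega)
  have hn0' : (n : ℝ) ≠ 0 := Nat.cast_ne_zero.mpr (by omega)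
  set P : Matrix (Fin n) (Fin n) ℂ := (n : ℂ)⁻¹ • allOnes n with hP
  set Q : Matrix (Fin n) (Fin n) ℂ := 1 - P with hQ
  have hJJ : allOnes n * allOnes n = (n : ℂ) • allOnes n := by
    ext j k; simp [allOnes, Matrix.mul_apply, Matrix.smul_apply]
  have hPP : P * P = P := by
    rw [hP, Matrix.smul_mul, Matrix.mul_smul, hJJ, smul_smul, smul_smul]
    congr 1
    field_simp
  have hQQ : Q * Q = Q := by
    rw [hQ]; simp [mul_sub, sub_mul, hPP]
  have hPQ : P * Q = 0 := by rw [hQ]; simp [mul_sub, hPP]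
  have hQP : Q * P = 0 := by rw [hQ]; simp [sub_mul, hPP]
  set c : ℂ := -(t : ℂ) * Complex.I with hc
  have hdecomp : c • adjKn n = (c * ((n : ℂ) - 1)) • P + ((t : ℂ) * Complex.I) • Q := by
    rw [hQ, hP]
    ext j k
    simp only [adjKn, allOnes, Matrix.smul_apply, Matrix.add_apply, Matrix.sub_apply,
      Matrix.one_apply, Matrix.of_apply, smul_eq_mul]
    split_ifs with h
    all_goals rw [hc]; field_simp; try ring
  have hcomm : Commute ((c * ((n : ℂ) - 1)) • P) (((t : ℂ) * Complex.I) • Q) := by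
    apply Commute.smul_left
    apply Commute.smul_right
    unfold Commute SemiconjBy
    rw [hPQ, hQP]
  have hmain : NormedSpace.exp (c • adjKn n)
      = Complex.exp (c * ((n : ℂ) - 1)) • P + Complex.exp ((t : ℂ) * Complex.I) • Q := by
    rw [hdecomp, Matrix.exp_add_of_commute _ _ hcomm,
      matrix_exp_smul_idem _ _ hPP, matrix_exp_smul_idem _ _ hQQ]
    have h1Q : (1 : Matrix (Fin n) (Fin n) ℂ) - Q = P := by rw [hQ, sub_sub_cancel]
    rw [h1Q]
    rw [← hQ]
    rw [mul_add, add_mul, add_mul]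
    simp only [Matrix.smul_mul, Matrix.mul_smul, hPQ, hQP, hPP, hQQ, smul_zero, zero_add,
      add_zero]
    abel
  refine ⟨hmain, fun u => ?_⟩
  have hentry : NormedSpace.exp (c • adjKn n) u u
      = Complex.exp (c * ((n : ℂ) - 1)) / (n : ℂ)
        + Complex.exp ((t : ℂ) * Complex.I) * (1 - 1 / (n : ℂ)) := by
    rw [hmain]
    simp [hP, hQ, allOnes, Matrix.one_apply, div_eq_mul_inv, mul_comm]
  refine ⟨by rw [hentry], ?_⟩
  rw [hentry]
  have habs1 : ‖Complex.exp (c * ((n : ℂ) - 1))‖ = 1 := by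
    have : c * ((n : ℂ) - 1) = ((-t * ((n : ℝ) - 1) : ℝ) : ℂ) * Complex.I := by
      rw [hc]; push_cast; ring
    rw [this, Complex.norm_exp_ofReal_mul_I]
  have habs2 : ‖Complex.exp ((t : ℂ) * Complex.I)‖ = 1 :=
    Complex.norm_exp_ofReal_mul_I t
  set x := Complex.exp (c * ((n : ℂ) - 1)) / (n : ℂ) with hx
  set y := Complex.exp ((t : ℂ) * Complex.I) * (1 - 1 / (n : ℂ)) with hy
  have hxabs : ‖x‖ = 1 / (n : ℝ) := by
    rw [hx, norm_div, habs1]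
    simp [hn0']
  have hyabs : ‖y‖ = 1 - 1 / (n : ℝ) := by
    have h1 : (1 : ℂ) - 1 / (n : ℂ) = ((1 - 1 / (n : ℝ) : ℝ) : ℂ) := by push_cast; ring
    rw [hy, norm_mul, habs2, one_mul, h1, Complex.norm_real, Real.norm_eq_abs, abs_of_nonneg]
    have : 1 / (n : ℝ) ≤ 1 := by
      rw [div_le_one (by positivity)]
      exact_mod_cast Nat.one_le_of_lt hn
    linarith
  have htri : ‖y‖ ≤ ‖x + y‖ + ‖x‖ := by
    have h := norm_sub_le_norm_sub_add_norm_sub y (-x) 0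
    simpa [sub_neg_eq_add, add_comm] using h
  have h2n : 2 ≤ (n : ℝ) := by exact_mod_cast hn
  have hhalf : (2 : ℝ) / (n : ℝ) = 1 / (n : ℝ) + 1 / (n : ℝ) := by ring
  rw [hxabs, hyabs] at htri
  linarith
end
end

section
/- Let n ≥ 2 and let L_n be the infinite lollipop graph. Then every clique vertex j ∈ {1, …, n−1} (i.e., every vertex of K_n other than the attachment vertex n) is sedentary in the quantitative sense that for all real t, |⟨e_j, e^{−itA(L_n)} e_j⟩| ≥ 1 − 2/(n−1). -/
noncomputable section

/-- Vertices of the infinite lollipop graph: we use `ℕ`, where the positive integers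
`1, 2, 3, …` are the actual vertices (the index `0` is unused and isolated).
The vertices `1, …, n` induce the complete graph `K_n` and the vertices `n, n+1, n+2, …`
induce a one-way infinite path, so `n` is the attachment vertex. -/
def lollipopAdj (n : ℕ) (j k : ℕ) : Prop :=
  (j ≠ k ∧ 1 ≤ j ∧ j ≤ n ∧ 1 ≤ k ∧ k ≤ n) ∨
  (k = j + 1 ∧ n ≤ j) ∨ (j = k + 1 ∧ n ≤ k)

instance (n j k : ℕ) : Decidable (lollipopAdj n j k) := by
  unfold lollipopAdj; infer_instance

/-- The Hilbert space `ℓ²(ℤ⁺)` (with a dummy coordinate `0`). -/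
abbrev lollipopSpace := lp (fun _ : ℕ => ℂ) 2

/-- The standard orthonormal basis vector `e_k` of `ℓ²`. -/
def stdVec (k : ℕ) : lollipopSpace := lp.single 2 k 1

lemma stdVec_apply (k i : ℕ) : (stdVec k : ∀ _ : ℕ, ℂ) i = if i = k then 1 else 0 := by
  rw [stdVec, lp.single_apply]
  split_ifs <;> simp_all

lemma inner_stdVec_left (i : ℕ) (f : lollipopSpace) :
    (inner ℂ (stdVec i) f : ℂ) = f i := by
  rw [stdVec, lp.inner_single_left]
  simp [RCLike.inner_apply]

lemma inner_stdVec_stdVec (i k : ℕ) :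
    (inner ℂ (stdVec i) (stdVec k) : ℂ) = if i = k then 1 else 0 := by
  rw [inner_stdVec_left, stdVec_apply]

lemma exp_apply_eigenvector {E : Type*} [NormedAddCommGroup E] [NormedSpace ℂ E]
    [CompleteSpace E] (B : E →L[ℂ] E) (v : E) (μ : ℂ) (h : B v = μ • v) :
    NormedSpace.exp B v = Complex.exp μ • v := by
  have hpow : ∀ k : ℕ, (B ^ k) v = μ ^ k • v := by
    intro k
    induction k with
    | zero => simp
    | succ k ih =>
      rw [pow_succ', pow_succ']
      simp [ContinuousLinearMap.mul_apply, h, ih, smul_smul, mul_comm]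
  have hsum : Summable (fun k : ℕ => ((k.factorial : ℂ))⁻¹ • B ^ k) :=
    NormedSpace.expSeries_summable' B
  have hsum2 : Summable (fun k : ℕ => ((k.factorial : ℂ))⁻¹ * μ ^ k) := by
    simpa [smul_eq_mul] using NormedSpace.expSeries_summable' (𝕂 := ℂ) μ
  calc NormedSpace.exp B v = (∑' k : ℕ, ((k.factorial : ℂ))⁻¹ • B ^ k) v := by
        rw [NormedSpace.exp_eq_tsum ℂ]
    _ = ∑' k : ℕ, (((k.factorial : ℂ))⁻¹ • B ^ k) v := by
        exact (ContinuousLinearMap.apply ℂ E v).map_tsum hsum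
    _ = ∑' k : ℕ, (((k.factorial : ℂ))⁻¹ * μ ^ k) • v := by
        congr 1; funext k
        simp [hpow k, smul_smul]
    _ = (∑' k : ℕ, ((k.factorial : ℂ))⁻¹ * μ ^ k) • v := hsum2.tsum_smul_const v
    _ = Complex.exp μ • v := by
        rw [Complex.exp_eq_exp_ℂ, NormedSpace.exp_eq_tsum ℂ]
        simp [smul_eq_mul]

set_option maxHeartbeats 3000000 in
/-- Let `n ≥ 2` and let `L_n` be the infinite lollipop graph.  Every clique vertex
`j ∈ {1, …, n-1}` (every vertex of `K_n` other than the attachment vertex `n`) is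
sedentary: for all real `t`, `|⟨e_j, e^{-itA(L_n)} e_j⟩| ≥ 1 - 2/(n-1)`. -/
theorem lollipop_clique_sedentary (n : ℕ) (hn : 2 ≤ n)
    (A : lollipopSpace →L[ℂ] lollipopSpace) (hsa : IsSelfAdjoint A)
    (hA : ∀ j k : ℕ, (inner ℂ (stdVec j) (A (stdVec k)) : ℂ)
      = if lollipopAdj n j k then 1 else 0)
    (j : ℕ) (hj1 : 1 ≤ j) (hjn : j ≤ n - 1) (t : ℝ) :
    1 - 2 / ((n : ℝ) - 1)
      ≤ ‖(inner ℂ (stdVec j) (NormedSpace.exp ((-(t : ℂ) * Complex.I) • A) (stdVec j)))‖ := by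
  set m : ℕ := n - 1 with hm
  have hm1 : 1 ≤ m := by omega
  have hmC : (m : ℂ) ≠ 0 := Nat.cast_ne_zero.mpr (by omega)
  have hjm : j ≤ m := hjn
  -- coordinates of A
  have hAcoord : ∀ i k : ℕ, (A (stdVec k) : ∀ _ : ℕ, ℂ) i
      = if lollipopAdj n i k then 1 else 0 := by
    intro i k; rw [← inner_stdVec_left]; exact hA i k
  -- clique differences are eigenvectors with eigenvalue -1
  have heig : ∀ k ∈ Finset.Icc 1 m, A (stdVec j - stdVec k) = -(stdVec j - stdVec k) := by
    intro k hk
    obtain ⟨hk1, hk2⟩ := Finset.mem_Icc.mp hk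
    apply lp.ext
    funext i
    have key : (A (stdVec j - stdVec k) : ∀ _ : ℕ, ℂ) i
        = (A (stdVec j) : ∀ _ : ℕ, ℂ) i - (A (stdVec k) : ∀ _ : ℕ, ℂ) i := by
      rw [map_sub, lp.coeFn_sub]; rfl
    have key2 : ((-(stdVec j - stdVec k) : lollipopSpace) : ∀ _ : ℕ, ℂ) i
        = -((stdVec j : ∀ _ : ℕ, ℂ) i - (stdVec k : ∀ _ : ℕ, ℂ) i) := by
      rw [lp.coeFn_neg, lp.coeFn_sub]; rfl
    rw [key, key2, hAcoord, hAcoord, stdVec_apply, stdVec_apply]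
    by_cases h1 : lollipopAdj n i j <;> by_cases h2 : lollipopAdj n i k <;>
      simp only [h1, h2, if_true, if_false] <;> simp only [lollipopAdj] at h1 h2
    all_goals split_ifs
    all_goals try omega
    all_goals norm_num
  -- the uniform superposition s and the difference w
  set S : lollipopSpace := ∑ k ∈ Finset.Icc 1 m, stdVec k with hS
  set s : lollipopSpace := (m : ℂ)⁻¹ • S with hs
  set w : lollipopSpace := stdVec j - s with hw
  have hwsum : w = (m : ℂ)⁻¹ • ∑ k ∈ Finset.Icc 1 m, (stdVec j - stdVec k) := by
    rw [Finset.sum_sub_distrib, Finset.sum_const, Nat.card_Icc, add_tsub_cancel_right,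
      smul_sub, hw, hs]
    congr 1
    rw [← Nat.cast_smul_eq_nsmul ℂ, smul_smul, inv_mul_cancel₀ hmC, one_smul]
  have hAw : A w = -w := by
    calc A w = (m : ℂ)⁻¹ • ∑ k ∈ Finset.Icc 1 m, A (stdVec j - stdVec k) := by
          rw [hwsum, map_smul, map_sum]
      _ = (m : ℂ)⁻¹ • ∑ k ∈ Finset.Icc 1 m, -(stdVec j - stdVec k) := by
          rw [Finset.sum_congr rfl heig]
      _ = -((m : ℂ)⁻¹ • ∑ k ∈ Finset.Icc 1 m, (stdVec j - stdVec k)) := by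
          rw [Finset.sum_neg_distrib, smul_neg]
      _ = -w := by rw [← hwsum]
  -- inner product values
  have hconj : (starRingEnd ℂ) ((m : ℂ)⁻¹) = (m : ℂ)⁻¹ := by simp
  have hSj : (inner ℂ S (stdVec j) : ℂ) = 1 := by
    rw [hS, sum_inner]
    simp [inner_stdVec_stdVec, Finset.sum_ite_eq, hj1, hjm]
  have hjS : (inner ℂ (stdVec j) S : ℂ) = 1 := by
    rw [hS, inner_sum]
    simp [inner_stdVec_stdVec, Finset.sum_ite_eq', hj1, hjm]
  have hSS : (inner ℂ S S : ℂ) = m := by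
    rw [hS, sum_inner]
    have h1 : ∀ k ∈ Finset.Icc 1 m, (inner ℂ (stdVec k) S : ℂ) = 1 := by
      intro k hk
      obtain ⟨hk1, hk2⟩ := Finset.mem_Icc.mp hk
      rw [hS, inner_sum]
      simp [inner_stdVec_stdVec, Finset.sum_ite_eq', hk1, hk2]
    rw [Finset.sum_congr rfl h1, Finset.sum_const, Nat.card_Icc, add_tsub_cancel_right]
    simp
  have hss : (inner ℂ s s : ℂ) = (m : ℂ)⁻¹ := by
    rw [hs, inner_smul_left, inner_smul_right, hSS, hconj]
    field_simp
  have hsej : (inner ℂ s (stdVec j) : ℂ) = (m : ℂ)⁻¹ := by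
    rw [hs, inner_smul_left, hSj, hconj, mul_one]
  have hejs : (inner ℂ (stdVec j) s : ℂ) = (m : ℂ)⁻¹ := by
    rw [hs, inner_smul_right, hjS, mul_one]
  have hsw : (inner ℂ s w : ℂ) = 0 := by
    rw [hw, inner_sub_right, hsej, hss, sub_self]
  have hws : (inner ℂ w s : ℂ) = 0 := by
    rw [← inner_conj_symm, hsw]; simp
  have hww : (inner ℂ w w : ℂ) = 1 - (m : ℂ)⁻¹ := by
    rw [hw, inner_sub_left, inner_sub_right, inner_sub_right, hsej, hss,
      inner_stdVec_stdVec, hejs]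
    simp
  have hssR : ‖s‖ ^ 2 = ((m : ℝ))⁻¹ := by
    have h1 := @inner_self_eq_norm_sq ℂ _ _ _ _ s
    rw [hss] at h1
    have hcast : ((m : ℕ) : ℂ)⁻¹ = (((m : ℝ))⁻¹ : ℝ) := by push_cast; ring
    rw [hcast] at h1
    simpa using h1.symm
  -- the unitary group
  set B : lollipopSpace →L[ℂ] lollipopSpace := (-(t : ℂ) * Complex.I) • A with hB
  have hBw : B w = ((t : ℂ) * Complex.I) • w := by
    rw [hB, ContinuousLinearMap.smul_apply, hAw, smul_neg, ← neg_smul]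
    congr 1; ring
  set U := NormedSpace.exp B with hU
  have hUw : U w = Complex.exp ((t : ℂ) * Complex.I) • w :=
    exp_apply_eigenvector B w _ hBw
  set V := NormedSpace.exp (((t : ℂ) * Complex.I) • A) with hV
  have hVw : V w = Complex.exp (-((t : ℂ) * Complex.I)) • w := by
    apply exp_apply_eigenvector
    rw [ContinuousLinearMap.smul_apply, hAw, smul_neg, ← neg_smul]
  have hstarB : star B = ((t : ℂ) * Complex.I) • A := by
    rw [hB, star_smul, hsa.star_eq]
    congr 1
    simp [Complex.conj_I]
  have hadjU : ContinuousLinearMap.adjoint U = V := by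
    rw [← ContinuousLinearMap.star_eq_adjoint, hU, NormedSpace.star_exp, hstarB, hV]
  have hVU : V * U = 1 := by
    letI : NormedAlgebra ℚ (lollipopSpace →L[ℂ] lollipopSpace) :=
      NormedAlgebra.restrictScalars ℚ ℂ _
    rw [hU, hV, ← NormedSpace.exp_add_of_commute]
    · have h0 : ((t : ℂ) * Complex.I) • A + B = 0 := by
        rw [hB, ← add_smul]
        have : (t : ℂ) * Complex.I + -(t : ℂ) * Complex.I = 0 := by ring
        rw [this, zero_smul]
      rw [h0, NormedSpace.exp_zero]
    · rw [hB]; exact ((Commute.refl A).smul_left _).smul_right _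
  have hVUx : ∀ x : lollipopSpace, V (U x) = x := by
    intro x
    have h1 : (V * U) x = (1 : lollipopSpace →L[ℂ] lollipopSpace) x := by rw [hVU]
    rwa [ContinuousLinearMap.mul_apply, ContinuousLinearMap.one_apply] at h1
  have hUs_norm : ‖U s‖ = ‖s‖ := by
    have h1 := ContinuousLinearMap.adjoint_inner_left U s (U s)
    rw [hadjU, hVUx] at h1
    have h2 := @inner_self_eq_norm_sq ℂ _ _ _ _ (U s)
    have h3 := @inner_self_eq_norm_sq ℂ _ _ _ _ s
    rw [← h1, h3] at h2
    have h4 := norm_nonneg (U s)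
    have h5 := norm_nonneg s
    nlinarith
  -- expand the inner product
  have hej : stdVec j = s + w := by rw [hw]; abel
  have hexpand : (inner ℂ (stdVec j) (U (stdVec j)) : ℂ)
      = inner ℂ s (U s) + Complex.exp ((t : ℂ) * Complex.I) * (1 - (m : ℂ)⁻¹) := by
    conv_lhs => rw [hej]
    rw [map_add, inner_add_left, inner_add_right, inner_add_right]
    have h1 : (inner ℂ s (U w) : ℂ) = 0 := by rw [hUw, inner_smul_right, hsw, mul_zero]
    have h2 : (inner ℂ w (U s) : ℂ) = 0 := by
      have hadjV : ContinuousLinearMap.adjoint V = U := by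
        rw [← hadjU, ContinuousLinearMap.adjoint_adjoint]
      rw [← hadjV, ContinuousLinearMap.adjoint_inner_right, hVw, inner_smul_left, hws,
        mul_zero]
    have h3 : (inner ℂ w (U w) : ℂ) = Complex.exp ((t : ℂ) * Complex.I) * (1 - (m : ℂ)⁻¹) := by
      rw [hUw, inner_smul_right, hww]
    rw [h1, h2, h3]; ring
  -- estimates
  have habs1 : ‖Complex.exp ((t : ℂ) * Complex.I)‖ = 1 := by
    rw [Complex.norm_exp]; simp
  have hmR : (1 : ℝ) ≤ (m : ℝ) := by exact_mod_cast hm1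
  have hminv : (m : ℝ)⁻¹ ≤ 1 := by
    rw [inv_le_one_iff₀]; right; exact hmR
  have hwwR : ‖(1 - (m : ℂ)⁻¹)‖ = 1 - (m : ℝ)⁻¹ := by
    have hcast : (1 - ((m : ℕ) : ℂ)⁻¹) = (((1 - (m : ℝ)⁻¹ : ℝ)) : ℂ) := by push_cast; ring
    rw [hcast, Complex.norm_real, Real.norm_of_nonneg (by linarith)]
  have habs2 : ‖(inner ℂ s (U s) : ℂ)‖ ≤ (m : ℝ)⁻¹ := by
    calc ‖(inner ℂ s (U s) : ℂ)‖ = ‖(inner ℂ s (U s) : ℂ)‖ := rfl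
      _ ≤ ‖s‖ * ‖U s‖ := norm_inner_le_norm s (U s)
      _ = ‖s‖ ^ 2 := by rw [hUs_norm]; ring
      _ = (m : ℝ)⁻¹ := hssR
  -- conclude
  rw [hexpand]
  have htri : ‖(Complex.exp ((t : ℂ) * Complex.I) * (1 - (m : ℂ)⁻¹))‖
        - ‖(inner ℂ s (U s) : ℂ)‖
      ≤ ‖((inner ℂ s (U s) : ℂ)
        + Complex.exp ((t : ℂ) * Complex.I) * (1 - (m : ℂ)⁻¹))‖ := by
    have h := norm_add_le
      ((inner ℂ s (U s) : ℂ) + Complex.exp ((t : ℂ) * Complex.I) * (1 - (m : ℂ)⁻¹))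
      (-(inner ℂ s (U s) : ℂ))
    simp only [add_neg_cancel_left, add_neg_cancel_comm, norm_neg] at h
    linarith [h]
  have hmain : ‖(Complex.exp ((t : ℂ) * Complex.I) * (1 - (m : ℂ)⁻¹))‖
      = 1 - (m : ℝ)⁻¹ := by
    rw [norm_mul, habs1, hwwR, one_mul]
  have hcastn : (n : ℝ) - 1 = (m : ℝ) := by
    rw [hm]; push_cast [Nat.cast_sub (by omega : 1 ≤ n)]; ring
  rw [hcastn]
  have hfin : 1 - 2 / (m : ℝ) ≤ (1 - (m : ℝ)⁻¹) - (m : ℝ)⁻¹ := by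
    rw [div_eq_mul_inv]; linarith
  rw [hmain] at htri
  linarith [htri, habs2, hfin]
end
end

section
/- For every integer m ≥ 1, the Krawtchouk chain K_m has perfect state transfer between its endpoints at time π/2: exp(−i(π/2) K_m) e_0 = (−i)^m e_m, where e_0 and e_m are the first and last standard basis vectors of ℂ^{m+1}; in particular |⟨e_m, exp(−i(π/2)K_m) e_0⟩| = 1. -/
noncomputable section

open Matrix

def kraw (m : ℕ) : Matrix (Fin (m + 1)) (Fin (m + 1)) ℂ :=
  Matrix.of fun j k =>
    if (k : ℕ) = (j : ℕ) + 1 then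
      (Real.sqrt ((((j : ℕ) : ℝ) + 1) * ((m : ℝ) - ((j : ℕ) : ℝ))) : ℂ)
    else if (j : ℕ) = (k : ℕ) + 1 then
      (Real.sqrt ((((k : ℕ) : ℝ) + 1) * ((m : ℝ) - ((k : ℕ) : ℝ))) : ℂ)
    else 0

namespace KrawAux

/-- The explicit solution of the Schrödinger equation. -/
def kf (m : ℕ) (t : ℝ) (j : Fin (m + 1)) : ℂ :=
  (Real.sqrt (m.choose (j : ℕ)) : ℂ) * Complex.cos t ^ (m - (j : ℕ)) *
    (-Complex.I * Complex.sin t) ^ (j : ℕ)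

lemma sqrt_succ (m : ℕ) (j : Fin (m + 1)) (hj : (j : ℕ) < m) :
    Real.sqrt (m.choose ((j : ℕ) + 1)) *
        Real.sqrt ((((j : ℕ) : ℝ) + 1) * ((m : ℝ) - ((j : ℕ) : ℝ)))
      = ((m : ℝ) - ((j : ℕ) : ℝ)) * Real.sqrt (m.choose (j : ℕ)) := by
  have hmj : ((j : ℕ) : ℝ) ≤ (m : ℝ) := by exact_mod_cast hj.le
  have h2 : (0 : ℝ) ≤ (m : ℝ) - ((j : ℕ) : ℝ) := by linarith
  rw [← Real.sqrt_mul (by positivity),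
    show ((m.choose ((j : ℕ) + 1)) : ℝ) * ((((j : ℕ) : ℝ) + 1) * ((m : ℝ) - ((j : ℕ) : ℝ)))
      = ((m : ℝ) - ((j : ℕ) : ℝ)) ^ 2 * (m.choose (j : ℕ)) from ?_,
    Real.sqrt_mul (by positivity), Real.sqrt_sq h2]
  have h := Nat.choose_succ_right_eq m (j : ℕ)
  have h' : ((m.choose ((j:ℕ)+1) : ℝ)) * (((j:ℕ):ℝ) + 1)
      = (m.choose (j:ℕ) : ℝ) * ((m : ℝ) - ((j:ℕ):ℝ)) := by
    have := congrArg (Nat.cast : ℕ → ℝ) h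
    push_cast [Nat.cast_sub hj.le] at this
    linarith [this]
  nlinarith [h']

lemma sqrt_pred (m : ℕ) (j : Fin (m + 1)) (hj : 0 < (j : ℕ)) :
    Real.sqrt (m.choose ((j : ℕ) - 1)) *
        Real.sqrt (((j : ℕ) : ℝ) * ((m : ℝ) - ((j : ℕ) : ℝ) + 1))
      = ((j : ℕ) : ℝ) * Real.sqrt (m.choose (j : ℕ)) := by
  have hjm : (j : ℕ) ≤ m := by omega
  have hmj : ((j : ℕ) : ℝ) ≤ (m : ℝ) := by exact_mod_cast hjm
  have h2 : (0 : ℝ) ≤ ((j : ℕ) : ℝ) := by positivity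
  rw [← Real.sqrt_mul (by positivity),
    show ((m.choose ((j : ℕ) - 1)) : ℝ) * (((j : ℕ) : ℝ) * ((m : ℝ) - ((j : ℕ) : ℝ) + 1))
      = (((j : ℕ) : ℝ)) ^ 2 * (m.choose (j : ℕ)) from ?_,
    Real.sqrt_mul (by positivity), Real.sqrt_sq h2]
  have h := Nat.choose_succ_right_eq m ((j : ℕ) - 1)
  rw [show (j : ℕ) - 1 + 1 = (j : ℕ) from by omega] at h
  have h' : ((m.choose (j:ℕ) : ℝ)) * ((j:ℕ):ℝ)
      = (m.choose ((j:ℕ)-1) : ℝ) * ((m : ℝ) - ((j:ℕ):ℝ) + 1) := by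
    have := congrArg (Nat.cast : ℕ → ℝ) h
    have hsub : ((m - ((j:ℕ)-1) : ℕ) : ℝ) = (m : ℝ) - ((j:ℕ):ℝ) + 1 := by
      rw [Nat.cast_sub (by omega)]
      push_cast [Nat.cast_sub (by omega : 1 ≤ (j:ℕ))]
      ring
    push_cast [hsub] at this
    linarith [this]
  nlinarith [h']

lemma kraw_mulVec (m : ℕ) (x : Fin (m + 1) → ℂ) (j : Fin (m + 1)) :
    (kraw m *ᵥ x) j
      = (Real.sqrt ((((j : ℕ) : ℝ) + 1) * ((m : ℝ) - ((j : ℕ) : ℝ))) : ℂ) * x (j + 1)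
      + (Real.sqrt (((j : ℕ) : ℝ) * ((m : ℝ) - ((j : ℕ) : ℝ) + 1)) : ℂ) * x (j - 1) := by
  have hsplit : ∀ k : Fin (m + 1), kraw m j k * x k
      = (if (k : ℕ) = (j : ℕ) + 1 then
          (Real.sqrt ((((j : ℕ) : ℝ) + 1) * ((m : ℝ) - ((j : ℕ) : ℝ))) : ℂ) * x k else 0)
      + (if (j : ℕ) = (k : ℕ) + 1 then
          (Real.sqrt (((j : ℕ) : ℝ) * ((m : ℝ) - ((j : ℕ) : ℝ) + 1)) : ℂ) * x k else 0) := by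
    intro k
    simp only [kraw, Matrix.of_apply]
    by_cases h1 : (k : ℕ) = (j : ℕ) + 1
    · have h2 : ¬ ((j : ℕ) = (k : ℕ) + 1) := by omega
      simp only [if_pos h1, if_neg h2, add_zero]
    · by_cases h2 : (j : ℕ) = (k : ℕ) + 1
      swap
      · simp only [if_neg h1, if_neg h2, zero_mul, add_zero]
      simp only [if_neg h1, if_pos h2, zero_add]
      congr 2
      have hk : ((k : ℕ) : ℝ) = ((j : ℕ) : ℝ) - 1 := by
        have : ((j : ℕ) : ℝ) = ((k : ℕ) : ℝ) + 1 := by exact_mod_cast h2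
        linarith
      rw [hk]; ring
  have hsum : (kraw m *ᵥ x) j = ∑ k, kraw m j k * x k := rfl
  rw [hsum, Finset.sum_congr rfl fun k _ => hsplit k, Finset.sum_add_distrib]
  congr 1
  · by_cases hj : (j : ℕ) < m
    · have hlast : j ≠ Fin.last m := by
        intro h; have hv := congrArg Fin.val h; rw [Fin.val_last] at hv; omega
      have hval : ((j + 1 : Fin (m + 1)) : ℕ) = (j : ℕ) + 1 := by
        rw [Fin.val_add_one, if_neg hlast]
      have hcond : ∀ k : Fin (m + 1),
          (if (k : ℕ) = (j : ℕ) + 1 then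
            (Real.sqrt ((((j : ℕ) : ℝ) + 1) * ((m : ℝ) - ((j : ℕ) : ℝ))) : ℂ) * x k else 0)
          = (if k = j + 1 then
            (Real.sqrt ((((j : ℕ) : ℝ) + 1) * ((m : ℝ) - ((j : ℕ) : ℝ))) : ℂ) * x k else 0) :=
        fun k => if_congr (by rw [Fin.ext_iff, hval]) rfl rfl
      rw [Finset.sum_congr rfl fun k _ => hcond k]
      rw [Finset.sum_ite_eq' Finset.univ (j + 1)
        (fun k => (Real.sqrt ((((j : ℕ) : ℝ) + 1) * ((m : ℝ) - ((j : ℕ) : ℝ))) : ℂ) * x k),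
        if_pos (Finset.mem_univ _)]
    · have hjm : (j : ℕ) = m := by omega
      have hzero : ((m : ℝ) - ((j : ℕ) : ℝ)) = 0 := by rw [hjm]; ring
      rw [Finset.sum_eq_zero, hzero, mul_zero, Real.sqrt_zero, Complex.ofReal_zero, zero_mul]
      intro k _
      rw [if_neg]
      have := k.isLt
      omega
  · by_cases hj : 0 < (j : ℕ)
    · have h0 : j ≠ 0 := by
        intro h; have hv := congrArg Fin.val h; rw [Fin.val_zero] at hv; omega
      have hval : ((j - 1 : Fin (m + 1)) : ℕ) = (j : ℕ) - 1 := by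
        rw [Fin.coe_sub_one, if_neg h0]
      have hcond : ∀ k : Fin (m + 1),
          (if (j : ℕ) = (k : ℕ) + 1 then
            (Real.sqrt (((j : ℕ) : ℝ) * ((m : ℝ) - ((j : ℕ) : ℝ) + 1)) : ℂ) * x k else 0)
          = (if k = j - 1 then
            (Real.sqrt (((j : ℕ) : ℝ) * ((m : ℝ) - ((j : ℕ) : ℝ) + 1)) : ℂ) * x k else 0) :=
        fun k => if_congr (by rw [Fin.ext_iff, hval]; omega) rfl rfl
      rw [Finset.sum_congr rfl fun k _ => hcond k]
      rw [Finset.sum_ite_eq' Finset.univ (j - 1)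
        (fun k => (Real.sqrt (((j : ℕ) : ℝ) * ((m : ℝ) - ((j : ℕ) : ℝ) + 1)) : ℂ) * x k),
        if_pos (Finset.mem_univ _)]
    · have hj0 : (j : ℕ) = 0 := by omega
      have hzero : ((j : ℕ) : ℝ) = 0 := by exact_mod_cast hj0
      rw [Finset.sum_eq_zero, hzero, zero_mul, Real.sqrt_zero, Complex.ofReal_zero, zero_mul]
      intro k _
      rw [if_neg]
      omega

lemma kf_hasDerivAt (m : ℕ) (t : ℝ) :
    HasDerivAt (fun s => kf m s) ((-Complex.I) • (kraw m *ᵥ kf m t)) t := by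
  rw [hasDerivAt_pi]
  intro j
  have hF : HasDerivAt
      (fun z : ℂ => (Real.sqrt (m.choose (j : ℕ)) : ℂ) *
        (Complex.cos z ^ (m - (j : ℕ)) * (-Complex.I * Complex.sin z) ^ (j : ℕ)))
      ((Real.sqrt (m.choose (j : ℕ)) : ℂ) *
        (((m - (j : ℕ) : ℕ) : ℂ) * Complex.cos (t : ℂ) ^ (m - (j : ℕ) - 1) *
            (-Complex.sin (t : ℂ)) * (-Complex.I * Complex.sin (t : ℂ)) ^ (j : ℕ)
          + Complex.cos (t : ℂ) ^ (m - (j : ℕ)) *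
            (((j : ℕ) : ℂ) * (-Complex.I * Complex.sin (t : ℂ)) ^ ((j : ℕ) - 1) *
              (-Complex.I * Complex.cos (t : ℂ))))) ((t : ℝ) : ℂ) :=
    HasDerivAt.const_mul _
      (((Complex.hasDerivAt_cos _).pow _).mul
        (((Complex.hasDerivAt_sin _).const_mul (-Complex.I)).pow _))
  have hf' := hF.comp_ofReal
  have hfun : (fun s : ℝ => kf m s j) = fun y : ℝ =>
      (Real.sqrt (m.choose (j : ℕ)) : ℂ) *
        (Complex.cos (y : ℂ) ^ (m - (j : ℕ)) *
          (-Complex.I * Complex.sin (y : ℂ)) ^ (j : ℕ)) := by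
    funext y
    rw [kf]; ring
  rw [hfun]
  refine HasDerivAt.congr_deriv hf' ?_
  -- value equality
  have hIs : -Complex.I * (-Complex.I * Complex.sin (t : ℂ)) = -Complex.sin (t : ℂ) := by
    rw [← mul_assoc, neg_mul_neg, Complex.I_mul_I]; ring
  have hT1 : -Complex.I *
        ((Real.sqrt ((((j : ℕ) : ℝ) + 1) * ((m : ℝ) - ((j : ℕ) : ℝ))) : ℂ) * kf m t (j + 1))
      = (Real.sqrt (m.choose (j : ℕ)) : ℂ) *
        (((m - (j : ℕ) : ℕ) : ℂ) * Complex.cos (t : ℂ) ^ (m - (j : ℕ) - 1) *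
          (-Complex.sin (t : ℂ)) * (-Complex.I * Complex.sin (t : ℂ)) ^ (j : ℕ)) := by
    by_cases hj : (j : ℕ) < m
    · have hlast : j ≠ Fin.last m := by
        intro h; have hv := congrArg Fin.val h; rw [Fin.val_last] at hv; omega
      have hval : ((j + 1 : Fin (m + 1)) : ℕ) = (j : ℕ) + 1 := by
        rw [Fin.val_add_one, if_neg hlast]
      have hs1 := sqrt_succ m j hj
      have hs1' : (Real.sqrt (m.choose ((j : ℕ) + 1)) : ℂ) *
            (Real.sqrt ((((j : ℕ) : ℝ) + 1) * ((m : ℝ) - ((j : ℕ) : ℝ))) : ℂ)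
          = (((m : ℕ) : ℂ) - ((j : ℕ) : ℂ)) * (Real.sqrt (m.choose (j : ℕ)) : ℂ) := by
        have := congrArg (fun r : ℝ => (r : ℂ)) hs1
        push_cast at this
        exact this
      have hcast : ((m - (j : ℕ) : ℕ) : ℂ) = ((m : ℕ) : ℂ) - ((j : ℕ) : ℂ) := by
        rw [Nat.cast_sub hj.le]
      rw [kf, hval, hcast]
      obtain ⟨n, hn⟩ : ∃ n, m - (j : ℕ) = n + 1 := ⟨m - (j : ℕ) - 1, by omega⟩
      rw [show m - ((j : ℕ) + 1) = n from by omega, hn,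
        show n + 1 - 1 = n from by omega, pow_succ]
      linear_combination
        ((Real.sqrt (m.choose ((j : ℕ) + 1)) : ℂ) *
          Complex.cos (t : ℂ) ^ n * (-Complex.I * Complex.sin (t : ℂ)) ^ (j : ℕ)) * hIs
        - (Complex.cos (t : ℂ) ^ n * Complex.sin (t : ℂ) *
            (-Complex.I * Complex.sin (t : ℂ)) ^ (j : ℕ)) * hs1'
        + (((Real.sqrt ((((j : ℕ) : ℝ) + 1) * ((m : ℝ) - ((j : ℕ) : ℝ))) : ℂ) - 1) *
            (Real.sqrt (m.choose ((j : ℕ) + 1)) : ℂ) * Complex.cos (t : ℂ) ^ n *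
            Complex.sin (t : ℂ) * (-Complex.I * Complex.sin (t : ℂ)) ^ (j : ℕ)) * Complex.I_sq
    · have hjm : (j : ℕ) = m := by omega
      have hzero : ((m : ℝ) - ((j : ℕ) : ℝ)) = 0 := by rw [hjm]; ring
      have hz2 : m - (j : ℕ) = 0 := by omega
      rw [hzero, mul_zero, Real.sqrt_zero, hz2]
      simp
  have hT2 : -Complex.I *
        ((Real.sqrt (((j : ℕ) : ℝ) * ((m : ℝ) - ((j : ℕ) : ℝ) + 1)) : ℂ) * kf m t (j - 1))
      = (Real.sqrt (m.choose (j : ℕ)) : ℂ) *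
        (Complex.cos (t : ℂ) ^ (m - (j : ℕ)) *
          (((j : ℕ) : ℂ) * (-Complex.I * Complex.sin (t : ℂ)) ^ ((j : ℕ) - 1) *
            (-Complex.I * Complex.cos (t : ℂ)))) := by
    by_cases hj : 0 < (j : ℕ)
    · have h0 : j ≠ 0 := by
        intro h; have hv := congrArg Fin.val h; rw [Fin.val_zero] at hv; omega
      have hval : ((j - 1 : Fin (m + 1)) : ℕ) = (j : ℕ) - 1 := by
        rw [Fin.coe_sub_one, if_neg h0]
      have hs2 := sqrt_pred m j hj
      have hs2' : (Real.sqrt (m.choose ((j : ℕ) - 1)) : ℂ) *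
            (Real.sqrt (((j : ℕ) : ℝ) * ((m : ℝ) - ((j : ℕ) : ℝ) + 1)) : ℂ)
          = ((j : ℕ) : ℂ) * (Real.sqrt (m.choose (j : ℕ)) : ℂ) := by
        have := congrArg (fun r : ℝ => (r : ℂ)) hs2
        push_cast at this
        exact this
      rw [kf, hval]
      have hjm : (j : ℕ) ≤ m := by omega
      rw [show m - ((j : ℕ) - 1) = (m - (j : ℕ)) + 1 from by omega, pow_succ]
      linear_combination
        (-Complex.I * Complex.cos (t : ℂ) ^ (m - (j : ℕ)) * Complex.cos (t : ℂ) *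
          (-Complex.I * Complex.sin (t : ℂ)) ^ ((j : ℕ) - 1)) * hs2'
    · have hj0 : ((j : ℕ) : ℝ) = 0 := by
        have : (j : ℕ) = 0 := by omega
        exact_mod_cast this
      have hj0' : ((j : ℕ) : ℂ) = 0 := by
        have : (j : ℕ) = 0 := by omega
        exact_mod_cast this
      rw [hj0, zero_mul, Real.sqrt_zero, hj0']
      simp
  symm
  rw [Pi.smul_apply, smul_eq_mul, kraw_mulVec m (kf m t) j, mul_add, hT1, hT2, ← mul_add]

lemma kf_zero (m : ℕ) : kf m 0 = Pi.single (0 : Fin (m + 1)) 1 := by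
  funext j
  by_cases hj : j = 0
  · subst hj
    simp [kf]
  · have hj' : (j : ℕ) ≠ 0 := by
      intro h
      exact hj (Fin.ext (by simpa using h))
    have : ((0 : ℝ) : ℂ) = 0 := by norm_num
    simp [kf, Pi.single_eq_of_ne hj, zero_pow hj']

lemma kf_pi_div_two (m : ℕ) :
    kf m (Real.pi / 2)
      = (-Complex.I) ^ m • (Pi.single (Fin.last m) 1 : Fin (m + 1) → ℂ) := by
  funext j
  have hcos : Complex.cos ((Real.pi / 2 : ℝ) : ℂ) = 0 := by
    rw [← Complex.ofReal_cos, Real.cos_pi_div_two, Complex.ofReal_zero]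
  have hsin : Complex.sin ((Real.pi / 2 : ℝ) : ℂ) = 1 := by
    rw [← Complex.ofReal_sin, Real.sin_pi_div_two, Complex.ofReal_one]
  by_cases hj : j = Fin.last m
  · subst hj
    have : (Fin.last m : ℕ) = m := Fin.val_last m
    rw [kf, hcos, hsin, this]
    simp [Nat.choose_self]
  · have hj' : (j : ℕ) < m := by
      have h1 : (j : ℕ) ≤ m := by omega
      rcases lt_or_eq_of_le h1 with h | h
      · exact h
      · exact absurd (Fin.ext (by simpa [Fin.val_last] using h)) hj
    have hne : m - (j : ℕ) ≠ 0 := by omega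
    rw [kf, hcos, hsin]
    simp [Pi.single_eq_of_ne hj, zero_pow hne]

lemma key (m : ℕ) :
    NormedSpace.exp ((-((Real.pi : ℂ) / 2) * Complex.I) • kraw m) *ᵥ
      (Pi.single (0 : Fin (m + 1)) 1 : Fin (m + 1) → ℂ)
      = (-Complex.I) ^ m • (Pi.single (Fin.last m) 1 : Fin (m + 1) → ℂ) := by
  classical
  letI : SeminormedRing (Matrix (Fin (m + 1)) (Fin (m + 1)) ℂ) := Matrix.linftyOpSemiNormedRing
  letI : NormedRing (Matrix (Fin (m + 1)) (Fin (m + 1)) ℂ) := Matrix.linftyOpNormedRing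
  letI : NormedAlgebra ℝ (Matrix (Fin (m + 1)) (Fin (m + 1)) ℂ) := Matrix.linftyOpNormedAlgebra
  haveI : CompleteSpace (Matrix (Fin (m + 1)) (Fin (m + 1)) ℂ) :=
    FiniteDimensional.complete ℝ _
  set M : Matrix (Fin (m + 1)) (Fin (m + 1)) ℂ := (-Complex.I) • kraw m with hM
  -- the result of appying a matrix to e₀, as a continuous linear map in the matrix
  let L : Matrix (Fin (m + 1)) (Fin (m + 1)) ℂ →ₗ[ℝ] (Fin (m + 1) → ℂ) :=
    { toFun := fun A => A *ᵥ (Pi.single (0 : Fin (m + 1)) 1 : Fin (m + 1) → ℂ)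
      map_add' := fun A B => Matrix.add_mulVec A B _
      map_smul' := fun c A => by
        simp only [RingHom.id_apply]
        exact Matrix.smul_mulVec c A _ }
  let Lc := LinearMap.toContinuousLinearMap L
  set g : ℝ → (Fin (m + 1) → ℂ) :=
    fun t => NormedSpace.exp (t • M) *ᵥ (Pi.single (0 : Fin (m + 1)) 1) with hg
  have hgderiv : ∀ t : ℝ, HasDerivAt g (M *ᵥ g t) t := by
    intro t
    have h1 : HasDerivAt (fun u : ℝ => NormedSpace.exp (u • M))
        (NormedSpace.exp (t • M) * M) t := hasDerivAt_exp_smul_const M t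
    have h2 := (Lc.hasFDerivAt.comp_hasDerivAt t h1)
    have hcomm : NormedSpace.exp (t • M) * M = M * NormedSpace.exp (t • M) :=
      (((Commute.refl M).smul_left t).exp_left).eq
    have h3 : Lc (NormedSpace.exp (t • M) * M) = M *ᵥ g t := by
      show (NormedSpace.exp (t • M) * M) *ᵥ _ = _
      rw [hcomm, ← Matrix.mulVec_mulVec]
    exact h2.congr_deriv h3
  -- lipschitz vector field
  let T : (Fin (m + 1) → ℂ) →ₗ[ℂ] (Fin (m + 1) → ℂ) := Matrix.mulVecLin M
  let Tc := LinearMap.toContinuousLinearMap T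
  have hlip : ∀ t : ℝ, LipschitzWith ‖Tc‖₊ (fun x : Fin (m + 1) → ℂ => M *ᵥ x) := by
    intro t
    have := Tc.lipschitz
    exact this
  have hfderiv : ∀ t : ℝ, HasDerivAt (fun s => kf m s) (M *ᵥ kf m t) t := by
    intro t
    have := kf_hasDerivAt m t
    rw [← Matrix.smul_mulVec] at this
    exact this
  have hunique := ODE_solution_unique (v := fun _ x => M *ᵥ x) (f := fun s => kf m s) (g := g)
    (a := 0) (b := Real.pi / 2)
    (fun t => hlip t)
    (fun t _ => ((hfderiv t).continuousAt.continuousWithinAt))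
    (fun t _ => ((hfderiv t).hasDerivWithinAt))
    (fun t _ => ((hgderiv t).continuousAt.continuousWithinAt))
    (fun t _ => ((hgderiv t).hasDerivWithinAt))
    (by
      show kf m 0 = NormedSpace.exp ((0 : ℝ) • M) *ᵥ Pi.single 0 1
      rw [kf_zero, zero_smul, NormedSpace.exp_zero, Matrix.one_mulVec])
  have hend := hunique ⟨le_of_lt Real.pi_div_two_pos, le_refl _⟩
  -- now translate
  have hsmul : ((Real.pi / 2 : ℝ) • M) = (-((Real.pi : ℂ) / 2) * Complex.I) • kraw m := by
    rw [hM, ← smul_one_smul ℂ (Real.pi / 2 : ℝ) ((-Complex.I) • kraw m), smul_smul]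
    congr 1
    have : ((Real.pi / 2 : ℝ) • (1 : ℂ)) = ((Real.pi / 2 : ℝ) : ℂ) := by
      rw [Complex.real_smul, mul_one]
    rw [this]
    push_cast
    ring
  have hexp : NormedSpace.exp ((Real.pi / 2 : ℝ) • M)
      = NormedSpace.exp ((-((Real.pi : ℂ) / 2) * Complex.I) • kraw m) := by
    rw [← hsmul]
  have hend' : kf m (Real.pi / 2)
      = NormedSpace.exp ((Real.pi / 2 : ℝ) • M) *ᵥ Pi.single 0 1 := hend
  rw [← hexp, ← hend', kf_pi_div_two]

end KrawAux

/-- For every `m ≥ 1` the Krawtchouk chain has perfect state transfer between its endpoints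
at time `π/2`: `exp(-i(π/2)K_m) e_0 = (-i)^m e_m`, hence `|⟨e_m, exp(-i(π/2)K_m)e_0⟩| = 1`. -/
theorem krawtchouk_pst (m : ℕ) (hm : 1 ≤ m) :
    NormedSpace.exp ((-((Real.pi : ℂ) / 2) * Complex.I) • kraw m) *ᵥ
        (Pi.single (0 : Fin (m + 1)) 1 : Fin (m + 1) → ℂ)
      = (-Complex.I) ^ m • (Pi.single (Fin.last m) 1 : Fin (m + 1) → ℂ) ∧
    ‖(NormedSpace.exp ((-((Real.pi : ℂ) / 2) * Complex.I) • kraw m) (Fin.last m) 0)‖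
      = 1 := by
  refine ⟨KrawAux.key m, ?_⟩
  have h := congrFun (KrawAux.key m) (Fin.last m)
  rw [Matrix.mulVec_single_one] at h
  simp only [mul_one, Pi.smul_apply, Pi.single_eq_same, smul_eq_mul] at h
  rw [show NormedSpace.exp ((-((Real.pi : ℂ) / 2) * Complex.I) • kraw m) (Fin.last m) 0
    = (-Complex.I) ^ m from h]
  simp [map_pow]
end
end
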